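/- Let E be a Banach f-algebra and (x_α)_{α∈A}, (y_β)_{β∈B} nets in E with x_α →mw x and y_β →mw y for some x, y ∈ E. If (x_α) is monotone (increasing), then the net (x_α * y_β)_{(α,β)∈A×B} is mw-convergent to x*y. -/

import Mathlib

open Filter Topology

/-- A net `x : ι → E` (along a filter `l`) in a Banach `f`-algebra is *multiplicative weak
convergent* (`mw`-convergent) to `a` if `|x i - a| * u` converges weakly to `0` for every
`u ≥ 0`, i.e. `f (|x i - a| * u) → 0` for every continuous linear functional `f` on `E`. -/
def MWTendsto {E : Type*} [NonUnitalNormedCommRing E] [Lattice E] [NormedSpace ℝ E]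
    {ι : Type*} (l : Filter ι) (x : ι → E) (a : E) : Prop :=
  ∀ u : E, 0 ≤ u → ∀ f : E →L[ℝ] ℝ, Tendsto (fun i => f (|x i - a| * u)) l (𝓝 0)

/-- Every continuous linear functional on a normed lattice (solid norm) decomposes as a
difference of two positive continuous linear functionals. -/
theorem exists_pos_decomp {E : Type*} [NormedAddCommGroup E] [Lattice E]
    [CovariantClass E E (· + ·) (· ≤ ·)] [NormedSpace ℝ E]
    (hsolid : ∀ a b : E, |a| ≤ |b| → ‖a‖ ≤ ‖b‖) (f : E →L[ℝ] ℝ) :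
    ∃ G H : E →L[ℝ] ℝ, (∀ v : E, 0 ≤ v → 0 ≤ G v) ∧ (∀ v : E, 0 ≤ v → 0 ≤ H v) ∧
      ∀ x : E, f x = G x - H x := by
  classical
  set T : E → Set ℝ := fun u => (fun v => f v) '' {v : E | 0 ≤ v ∧ v ≤ u} with hT
  set q : E → ℝ := fun u => sSup (T u) with hqdef
  have hub : ∀ u : E, ∀ r ∈ T u, r ≤ ‖f‖ * ‖u‖ := by
    rintro u r ⟨v, ⟨hv0, hvu⟩, rfl⟩
    have h0u : (0 : E) ≤ u := hv0.trans hvu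
    have hnv : ‖v‖ ≤ ‖u‖ := hsolid _ _ (by rwa [abs_of_nonneg hv0, abs_of_nonneg h0u])
    calc f v ≤ |f v| := le_abs_self _
      _ = ‖f v‖ := (Real.norm_eq_abs _).symm
      _ ≤ ‖f‖ * ‖v‖ := f.le_opNorm v
      _ ≤ ‖f‖ * ‖u‖ := by
          exact mul_le_mul_of_nonneg_left hnv (norm_nonneg f)
  have hbdd : ∀ u : E, BddAbove (T u) := fun u => ⟨‖f‖ * ‖u‖, fun r hr => hub u r hr⟩
  have hmem0 : ∀ u : E, 0 ≤ u → (0 : ℝ) ∈ T u := fun u hu => ⟨0, ⟨le_rfl, hu⟩, map_zero f⟩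
  have hne : ∀ u : E, 0 ≤ u → (T u).Nonempty := fun u hu => ⟨0, hmem0 u hu⟩
  have hq_nonneg : ∀ u : E, 0 ≤ u → 0 ≤ q u := fun u hu => le_csSup (hbdd u) (hmem0 u hu)
  have hqf : ∀ u : E, 0 ≤ u → f u ≤ q u := fun u hu =>
    le_csSup (hbdd u) ⟨u, ⟨hu, le_rfl⟩, rfl⟩
  have hq0 : q 0 = 0 := by
    refine le_antisymm (csSup_le (hne 0 le_rfl) ?_) (hq_nonneg 0 le_rfl)
    rintro r ⟨v, ⟨hv0, hv0'⟩, rfl⟩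
    have : v = 0 := le_antisymm hv0' hv0
    simp [this]
  have hqadd : ∀ u w : E, 0 ≤ u → 0 ≤ w → q (u + w) = q u + q w := by
    intro u w hu hw
    have haux : ∀ r ∈ T u, ∀ s ∈ T w, r + s ≤ q (u + w) := by
      rintro r ⟨v1, ⟨hv10, hv1u⟩, rfl⟩ s ⟨v2, ⟨hv20, hv2w⟩, rfl⟩
      have : f v1 + f v2 = f (v1 + v2) := (map_add f v1 v2).symm
      rw [this]
      exact le_csSup (hbdd _) ⟨v1 + v2, ⟨add_nonneg hv10 hv20, add_le_add hv1u hv2w⟩, rfl⟩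
    refine le_antisymm ?_ ?_
    · refine csSup_le (hne _ (add_nonneg hu hw)) ?_
      rintro r ⟨v, ⟨hv0, hvuw⟩, rfl⟩
      set v1 : E := v ⊓ u with hv1
      have h10 : 0 ≤ v1 := le_inf hv0 hu
      have h1u : v1 ≤ u := inf_le_right
      have h20 : 0 ≤ v - v1 := sub_nonneg.2 inf_le_left
      have h2w : v - v1 ≤ w := by
        rw [hv1, sub_inf, sub_self]
        exact sup_le hw (by rwa [sub_le_iff_le_add, add_comm u w] at *)
      have hsplit : f v = f v1 + f (v - v1) := by rw [← map_add]; congr 1; abel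
      show f v ≤ q u + q w
      rw [hsplit]
      exact add_le_add (le_csSup (hbdd u) ⟨v1, ⟨h10, h1u⟩, rfl⟩)
        (le_csSup (hbdd w) ⟨v - v1, ⟨h20, h2w⟩, rfl⟩)
    · have h1 : ∀ r ∈ T u, r + q w ≤ q (u + w) := by
        intro r hr
        have hq' : q w ≤ q (u + w) - r :=
          csSup_le (hne w hw) (fun s hs => by linarith [haux r hr s hs])
        linarith
      have h2 : q u ≤ q (u + w) - q w :=
        csSup_le (hne u hu) (fun r hr => by linarith [h1 r hr])
      linarith
  have hqdiff : ∀ u v u' v' : E, 0 ≤ u → 0 ≤ v → 0 ≤ u' → 0 ≤ v' → u - v = u' - v' →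
      q u - q v = q u' - q v' := by
    intro u v u' v' hu hv hu' hv' h
    have hsum : u + v' = u' + v := by
      have := sub_eq_sub_iff_add_eq_add.1 h
      exact this
    have h1 := hqadd u v' hu hv'
    have h2 := hqadd u' v hu' hv
    rw [hsum, h2] at h1
    linarith
  set G0 : E → ℝ := fun x => q (x⁺) - q (x⁻) with hG0
  have hG0add : ∀ x y : E, G0 (x + y) = G0 x + G0 y := by
    intro x y
    have e1 : (x + y)⁺ - (x + y)⁻ = (x⁺ + y⁺) - (x⁻ + y⁻) := by
      rw [posPart_sub_negPart,
        show (x⁺ + y⁺) - (x⁻ + y⁻) = (x⁺ - x⁻) + (y⁺ - y⁻) from by abel,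
        posPart_sub_negPart, posPart_sub_negPart]
    have := hqdiff _ _ _ _ (posPart_nonneg _) (negPart_nonneg _)
      (add_nonneg (posPart_nonneg _) (posPart_nonneg _))
      (add_nonneg (negPart_nonneg _) (negPart_nonneg _)) e1
    rw [hqadd _ _ (posPart_nonneg _) (posPart_nonneg _),
      hqadd _ _ (negPart_nonneg _) (negPart_nonneg _)] at this
    simp only [hG0]
    linarith
  have hposle : ∀ z : E, ‖z⁺‖ ≤ ‖z‖ := by
    intro z
    refine hsolid _ _ ?_
    rw [abs_of_nonneg (posPart_nonneg z)]
    rw [posPart_def]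
    exact sup_le (le_abs_self z) (abs_nonneg z)
  have hnegle : ∀ z : E, ‖z⁻‖ ≤ ‖z‖ := by
    intro z
    refine hsolid _ _ ?_
    rw [abs_of_nonneg (negPart_nonneg z)]
    rw [negPart_def]
    exact sup_le (neg_le_abs z) (abs_nonneg z)
  have hq_ub : ∀ u : E, 0 ≤ u → q u ≤ ‖f‖ * ‖u‖ := fun u hu =>
    csSup_le (hne u hu) (hub u)
  have hG0bound : ∀ x : E, ‖G0 x‖ ≤ (2 * ‖f‖) * ‖x‖ := by
    intro x
    have h1 : 0 ≤ q (x⁺) := hq_nonneg _ (posPart_nonneg x)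
    have h2 : 0 ≤ q (x⁻) := hq_nonneg _ (negPart_nonneg x)
    have h3 : q (x⁺) ≤ ‖f‖ * ‖x⁺‖ := hq_ub _ (posPart_nonneg x)
    have h4 : q (x⁻) ≤ ‖f‖ * ‖x⁻‖ := hq_ub _ (negPart_nonneg x)
    have h5 : ‖f‖ * ‖x⁺‖ ≤ ‖f‖ * ‖x‖ := mul_le_mul_of_nonneg_left (hposle x) (norm_nonneg f)
    have h6 : ‖f‖ * ‖x⁻‖ ≤ ‖f‖ * ‖x‖ := mul_le_mul_of_nonneg_left (hnegle x) (norm_nonneg f)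
    rw [Real.norm_eq_abs, abs_le]
    constructor <;> simp only [hG0] <;> nlinarith [norm_nonneg x, norm_nonneg f]
  set Gm : E →+ ℝ := AddMonoidHom.mk' G0 hG0add with hGm
  have hcont : Continuous Gm := AddMonoidHomClass.continuous_of_bound Gm (2 * ‖f‖) hG0bound
  set G : E →L[ℝ] ℝ := Gm.toRealLinearMap hcont with hG
  have hGval : ∀ z : E, G z = G0 z := fun z => by
    rw [hG]; exact congrFun (AddMonoidHom.coe_toRealLinearMap Gm hcont) z
  have hGpos : ∀ v : E, 0 ≤ v → 0 ≤ G v := by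
    intro v hv
    rw [hGval, hG0]
    simp only
    rw [posPart_eq_self.2 hv, negPart_eq_zero.2 hv, hq0]
    have := hq_nonneg v hv
    linarith
  refine ⟨G, G - f, hGpos, ?_, ?_⟩
  · intro v hv
    have h1 : f v ≤ q v := hqf v hv
    have h2 : G v = q v := by
      rw [hGval, hG0]; simp only
      rw [posPart_eq_self.2 hv, negPart_eq_zero.2 hv, hq0]; ring
    simp only [ContinuousLinearMap.sub_apply]
    linarith
  · intro z
    simp only [ContinuousLinearMap.sub_apply]
    ring

/-- If `x_α →mw x`, `y_β →mw y` and `(x_α)` is monotone (increasing), then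
`x_α * y_β →mw x * y`. -/
theorem mw_mul
    {E : Type*} [NonUnitalNormedCommRing E] [Lattice E]
    [CovariantClass E E (· + ·) (· ≤ ·)] [NormedSpace ℝ E] [CompleteSpace E]
    (hsolid : ∀ a b : E, |a| ≤ |b| → ‖a‖ ≤ ‖b‖)
    (hmulpos : ∀ a b : E, 0 ≤ a → 0 ≤ b → 0 ≤ a * b)
    (hfalg : ∀ a b c : E, a ⊓ b = 0 → 0 ≤ c → (a * c) ⊓ b = 0)
    {A : Type*} [Nonempty A] [SemilatticeSup A]
    {B : Type*} [Nonempty B] [SemilatticeSup B]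
    (x : A → E) (y : B → E) (a b : E)
    (hx : MWTendsto atTop x a) (hy : MWTendsto atTop y b) (hmono : Monotone x) :
    MWTendsto atTop (fun p : A × B => x p.1 * y p.2) (a * b) := by
  intro u hu f
  -- multiplication by a nonnegative element is monotone
  have hmulmono : ∀ v w t : E, v ≤ w → 0 ≤ t → v * t ≤ w * t := by
    intro v w t hvw ht
    have h := hmulpos (w - v) t (sub_nonneg.2 hvw) ht
    rw [sub_mul] at h
    exact sub_nonneg.1 h
  -- |v * w| ≤ |v| * |w|
  have habsmul : ∀ v w : E, |v * w| ≤ |v| * |w| := by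
    intro v w
    have hP : (0 : E) ≤ v⁺ * w⁺ + v⁻ * w⁻ :=
      add_nonneg (hmulpos _ _ (posPart_nonneg _) (posPart_nonneg _))
        (hmulpos _ _ (negPart_nonneg _) (negPart_nonneg _))
    have hN : (0 : E) ≤ v⁺ * w⁻ + v⁻ * w⁺ :=
      add_nonneg (hmulpos _ _ (posPart_nonneg _) (negPart_nonneg _))
        (hmulpos _ _ (negPart_nonneg _) (posPart_nonneg _))
    have hid : v * w = (v⁺ * w⁺ + v⁻ * w⁻) - (v⁺ * w⁻ + v⁻ * w⁺) := by
      conv_lhs => rw [← posPart_sub_negPart v, ← posPart_sub_negPart w]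
      simp only [mul_sub, sub_mul]
      abel
    have hid2 : |v| * |w| = (v⁺ * w⁺ + v⁻ * w⁻) + (v⁺ * w⁻ + v⁻ * w⁺) := by
      rw [← posPart_add_negPart v, ← posPart_add_negPart w]
      simp only [mul_add, add_mul]
      abel
    rw [hid, hid2]
    set P : E := v⁺ * w⁺ + v⁻ * w⁻
    set N : E := v⁺ * w⁻ + v⁻ * w⁺
    refine abs_le'.2 ⟨?_, ?_⟩
    · exact (sub_le_self P hN).trans (le_add_of_nonneg_right hN)
    · rw [neg_sub]
      exact (sub_le_self N hP).trans (by rw [add_comm]; exact le_add_of_nonneg_right hP)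
  -- key claim: convergence against every positive functional
  have key : ∀ g : E →L[ℝ] ℝ, (∀ v : E, 0 ≤ v → 0 ≤ g v) →
      Tendsto (fun p : A × B => g (|x p.1 * y p.2 - a * b| * u)) atTop (𝓝 0) := by
    intro g hg
    have hgmono : ∀ v w : E, v ≤ w → g v ≤ g w := by
      intro v w hvw
      have := hg (w - v) (sub_nonneg.2 hvw)
      rw [map_sub] at this
      linarith
    -- Claim 1 : g ((x α - a)⁺ * w) = 0 for every α and w ≥ 0
    have hclaim : ∀ (α : A) (w : E), 0 ≤ w → g ((x α - a)⁺ * w) = 0 := by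
      intro α w hw
      have h0 : 0 ≤ g ((x α - a)⁺ * w) := hg _ (hmulpos _ _ (posPart_nonneg _) hw)
      have hle : g ((x α - a)⁺ * w) ≤ 0 := by
        refine ge_of_tendsto (hx w hw g) ?_
        filter_upwards [eventually_ge_atTop α] with α' hα'
        refine hgmono _ _ (hmulmono _ _ _ ?_ hw)
        calc (x α - a)⁺ ≤ (x α' - a)⁺ := posPart_mono (sub_le_sub_right (hmono hα') a)
          _ ≤ |x α' - a| := by
              rw [posPart_def]
              exact sup_le (le_abs_self _) (abs_nonneg _)
      linarith
    set α₀ : A := Classical.arbitrary A with hα₀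
    set β₀ : B := Classical.arbitrary B with hβ₀
    have hsnd : Tendsto (fun p : A × B => p.2) atTop atTop := by
      rw [← prod_atTop_atTop_eq]; exact tendsto_snd
    have hfst : Tendsto (fun p : A × B => p.1) atTop atTop := by
      rw [← prod_atTop_atTop_eq]; exact tendsto_fst
    have h1 := (hy ((x α₀ - a)⁻ * u) (hmulpos _ _ (negPart_nonneg _) hu) g).comp hsnd
    have h2 := (hy (|a| * u) (hmulpos _ _ (abs_nonneg _) hu) g).comp hsnd
    have h3 := (hx (|b| * u) (hmulpos _ _ (abs_nonneg _) hu) g).comp hfst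
    have hB : Tendsto (fun p : A × B =>
        g (|y p.2 - b| * ((x α₀ - a)⁻ * u)) + g (|y p.2 - b| * (|a| * u))
          + g (|x p.1 - a| * (|b| * u))) atTop (𝓝 0) := by
      have := (h1.add h2).add h3
      simpa using this
    refine squeeze_zero' ?_ ?_ hB
    · exact Eventually.of_forall fun p => hg _ (hmulpos _ _ (abs_nonneg _) hu)
    · filter_upwards [eventually_ge_atTop (α₀, β₀)] with p hp
      obtain ⟨α, β⟩ := p
      have hα : α₀ ≤ α := hp.1
      -- triangle inequality step
      have hid : x α * y β - a * b = (x α - a) * (y β - b) + a * (y β - b) + (x α - a) * b := by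
        simp only [mul_sub, sub_mul]
        abel
      have hstep1 : |x α * y β - a * b|
          ≤ |x α - a| * |y β - b| + |a| * |y β - b| + |x α - a| * |b| := by
        rw [hid]
        calc |(x α - a) * (y β - b) + a * (y β - b) + (x α - a) * b|
            ≤ |(x α - a) * (y β - b) + a * (y β - b)| + |(x α - a) * b| := abs_add_le _ _
          _ ≤ |(x α - a) * (y β - b)| + |a * (y β - b)| + |(x α - a) * b| :=
              add_le_add (abs_add_le _ _) le_rfl
          _ ≤ |x α - a| * |y β - b| + |a| * |y β - b| + |x α - a| * |b| :=
              add_le_add (add_le_add (habsmul _ _) (habsmul _ _)) (habsmul _ _)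
      have hstep2 : |x α * y β - a * b| * u
          ≤ (|x α - a| * |y β - b| + |a| * |y β - b| + |x α - a| * |b|) * u :=
        hmulmono _ _ _ hstep1 hu
      have hgz : g (|x α * y β - a * b| * u)
          ≤ g ((|x α - a| * |y β - b| + |a| * |y β - b| + |x α - a| * |b|) * u) :=
        hgmono _ _ hstep2
      -- expand the right hand side
      have hc : |x α - a| = (x α - a)⁺ + (x α - a)⁻ := (posPart_add_negPart _).symm
      have hexp : (|x α - a| * |y β - b| + |a| * |y β - b| + |x α - a| * |b|) * u
          = (x α - a)⁺ * (|y β - b| * u) + (x α - a)⁻ * (|y β - b| * u)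
            + |y β - b| * (|a| * u) + |x α - a| * (|b| * u) := by
        rw [hc]
        simp only [mul_add, add_mul]
        simp only [mul_comm, mul_assoc, mul_left_comm]
        try abel
      rw [hexp, map_add, map_add, map_add,
        hclaim α (|y β - b| * u) (hmulpos _ _ (abs_nonneg _) hu)] at hgz
      -- bound the negative-part term using monotonicity
      have hneg : (x α - a)⁻ ≤ (x α₀ - a)⁻ := negPart_anti (sub_le_sub_right (hmono hα) a)
      have hterm : g ((x α - a)⁻ * (|y β - b| * u))
          ≤ g (|y β - b| * ((x α₀ - a)⁻ * u)) := by
        have h1 : (x α - a)⁻ * (|y β - b| * u) ≤ (x α₀ - a)⁻ * (|y β - b| * u) :=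
          hmulmono _ _ _ hneg (hmulpos _ _ (abs_nonneg _) hu)
        have h2 : (x α₀ - a)⁻ * (|y β - b| * u) = |y β - b| * ((x α₀ - a)⁻ * u) := by
          rw [mul_left_comm]
        exact (hgmono _ _ h1).trans_eq (by rw [h2])
      simp only at hgz ⊢
      linarith
  obtain ⟨G, H, hG, hH, hf⟩ := exists_pos_decomp hsolid f
  have : (fun p : A × B => f (|x p.1 * y p.2 - a * b| * u))
      = fun p : A × B => G (|x p.1 * y p.2 - a * b| * u) - H (|x p.1 * y p.2 - a * b| * u) :=
    funext fun p => hf _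
  rw [this]
  simpa using (key G hG).sub (key H hH)
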